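/- Let m ≥ 5 be odd, let u be a positive integer with gcd(u, m) = 1, and let ρ ∈ F_2. For b ∈ F_q^*, let c_b = (Tr(b·d_1),...,Tr(b·d_n)) be the codeword of C_{D_ρ} associated to b. Then: (1) if b = 1, the Hamming weight of c_b equals |D_ρ|; (2) if b ∈ F_q \ F_2, the Hamming weight of c_b lies in { |D_ρ|/2 − 2^{(m−5)/2}, |D_ρ|/2 + 2^{(m−5)/2} }. -/

import Mathlib

/-- Hamming weight of a binary vector: the number of nonzero coordinates. -/
noncomputable def wt {ι : Type*} (c : ι → ZMod 2) : ℕ := Nat.card {i : ι // c i ≠ 0}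

/-- Number of codewords of Hamming weight `w` in a set of binary vectors. -/
noncomputable def weightCount {ι : Type*} (C : Set (ι → ZMod 2)) (w : ℕ) : ℕ :=
  Nat.card {c : ι → ZMod 2 // c ∈ C ∧ wt c = w}

/-- The dual code: all vectors orthogonal (standard inner product) to every codeword. -/
def dualCode {ι : Type*} (C : Set (ι → ZMod 2)) : Set (ι → ZMod 2) :=
  {x | ∀ c ∈ C, ∑ᶠ i, x i * c i = 0}

/-- A code is projective if the minimum distance of its dual is at least 3. -/
def IsProjective {ι : Type*} (C : Set (ι → ZMod 2)) : Prop :=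
  ∀ x ∈ dualCode C, x ≠ 0 → 3 ≤ wt x

/-- `d` is the minimum distance of `C`: the least Hamming weight of a nonzero codeword. -/
def IsMinDist {ι : Type*} (C : Set (ι → ZMod 2)) (d : ℕ) : Prop :=
  (∃ c ∈ C, c ≠ 0 ∧ wt c = d) ∧ ∀ c ∈ C, c ≠ 0 → d ≤ wt c

/-- The number of nonzero Hamming weights occurring among codewords of `C`. -/
noncomputable def numNonzeroWeights {ι : Type*} (C : Set (ι → ZMod 2)) : ℕ :=
  Nat.card {i : ℕ | 1 ≤ i ∧ weightCount C i ≠ 0}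

/-- The codewords of weight `w` in `C` hold a 2-design with index `lam`: every pair of
distinct coordinate positions lies in the support of exactly `lam` codewords of weight `w`. -/
def HoldsTwoDesign {ι : Type*} (C : Set (ι → ZMod 2)) (w lam : ℕ) : Prop :=
  ∀ p q : ι, p ≠ q →
    Nat.card {c : ι → ZMod 2 // c ∈ C ∧ wt c = w ∧ c p ≠ 0 ∧ c q ≠ 0} = lam

/-- The defining set `D_ρ = {x ∈ F_{2^m} : Tr(x) = 1, Tr(x^{2^u+1}) = ρ}`. -/
def Dset (m u : ℕ) (ρ : ZMod 2) : Set (GaloisField 2 m) :=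
  {x | Algebra.trace (ZMod 2) (GaloisField 2 m) x = 1 ∧
       Algebra.trace (ZMod 2) (GaloisField 2 m) (x ^ (2 ^ u + 1)) = ρ}

/-- The linear map `b ↦ (Tr(b·d))_{d ∈ D_ρ}`. -/
noncomputable def codeMap (m u : ℕ) (ρ : ZMod 2) :
    GaloisField 2 m →ₗ[ZMod 2] (↥(Dset m u ρ) → ZMod 2) :=
  LinearMap.pi fun d =>
    (Algebra.trace (ZMod 2) (GaloisField 2 m)).comp
      (LinearMap.mulRight (ZMod 2) (d : GaloisField 2 m))

/-- The code `C_{D_ρ} = {(Tr(b·d))_{d ∈ D_ρ} : b ∈ F_{2^m}}`. -/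
noncomputable def codeD (m u : ℕ) (ρ : ZMod 2) :
    Submodule (ZMod 2) (↥(Dset m u ρ) → ZMod 2) :=
  LinearMap.range (codeMap m u ρ)


open Finset
open scoped Classical
abbrev F (m : ℕ) := GaloisField 2 m
noncomputable instance (m : ℕ) : Fintype (F m) := Fintype.ofFinite _
noncomputable def Tr (m : ℕ) : F m →ₗ[ZMod 2] ZMod 2 := Algebra.trace (ZMod 2) (F m)
lemma cardF (m : ℕ) (hm : m ≠ 0) : Fintype.card (F m) = 2 ^ m := by
  rw [← Nat.card_eq_fintype_card]; exact GaloisField.card 2 m hm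
lemma powcard (m : ℕ) (hm : m ≠ 0) (x : F m) : x ^ (2:ℕ)^m = x := by
  have := FiniteField.pow_card x
  rwa [cardF m hm] at this
noncomputable def frobAE (m : ℕ) : F m ≃ₐ[ZMod 2] F m :=
  AlgEquiv.ofRingEquiv (f := frobeniusEquiv (F m) 2)
    (fun a => by
      show (algebraMap (ZMod 2) (F m) a) ^ (2:ℕ) = algebraMap (ZMod 2) (F m) a
      rw [← map_pow]; congr 1; revert a; decide)
lemma tr_sq (m : ℕ) (x : F m) : Tr m (x ^ (2:ℕ)) = Tr m x :=
  Algebra.trace_eq_of_algEquiv (frobAE m) x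
lemma tr_pow2 (m k : ℕ) (x : F m) : Tr m (x ^ (2:ℕ)^k) = Tr m x := by
  induction k with
  | zero => simp
  | succ k ih => rw [pow_succ, pow_mul, tr_sq, ih]
lemma tr_one (m : ℕ) (hm : Odd m) : Tr m 1 = 1 := by
  have h0 : m ≠ 0 := by rintro rfl; simp at hm
  have h := Algebra.trace_algebraMap (R := ZMod 2) (S := F m) (1 : ZMod 2)
  have h2 : Tr m 1 = (Module.finrank (ZMod 2) (F m)) • (1 : ZMod 2) := by
    simpa [Tr] using h
  rw [h2, GaloisField.finrank 2 h0, Nat.smul_one_eq_cast]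
  obtain ⟨k, rfl⟩ := hm
  push_cast
  simp [ZMod.natCast_self]
  exact Or.inl (by decide)
lemma exists_tr_one (m : ℕ) (hm : m ≠ 0) : ∃ z : F m, Tr m z = 1 := by
  have hnz := Algebra.trace_ne_zero (ZMod 2) (F m)
  have : ∃ z : F m, Tr m z ≠ 0 := by
    by_contra h
    push_neg at h
    exact hnz (LinearMap.ext fun z => h z)
  obtain ⟨z, hz⟩ := this
  exact ⟨z, by revert hz; generalize (Tr m) z = t; revert t; decide⟩

noncomputable def E : ZMod 2 → ℤ := fun t => if t = 0 then 1 else -1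
lemma E_add (s t : ZMod 2) : E (s + t) = E s * E t := by revert s t; decide
lemma E_zero : E 0 = 1 := rfl
lemma E_one : E 1 = -1 := rfl

-- sum of character over linear form
lemma sumE_lin (m : ℕ) (hm : m ≠ 0) (c : F m) (hc : c ≠ 0) :
    ∑ x : F m, E (Tr m (c * x)) = 0 := by
  obtain ⟨z, hz⟩ := exists_tr_one m hm
  set y : F m := c⁻¹ * z with hy
  have hcy : Tr m (c * y) = 1 := by
    rw [hy, ← mul_assoc, mul_inv_cancel₀ hc, one_mul]; exact hz
  have key : ∑ x : F m, E (Tr m (c * x)) = ∑ x : F m, E (Tr m (c * (x + y))) := by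
    exact (Fintype.sum_equiv (Equiv.addRight y) _ _ (fun x => rfl)).symm
  have : ∀ x : F m, E (Tr m (c * (x + y))) = E (Tr m (c * x)) * (-1 : ℤ) := by
    intro x
    rw [mul_add, map_add, E_add, hcy, E_one]
  simp_rw [this, ← Finset.sum_mul] at key
  linarith

lemma sumE_lin_ite (m : ℕ) (hm : m ≠ 0) (c : F m) :
    ∑ x : F m, E (Tr m (c * x)) = if c = 0 then (2:ℤ)^m else 0 := by
  by_cases hc : c = 0
  · simp [hc, E_zero, cardF m hm]
  · simp [hc, sumE_lin m hm c hc]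

lemma pow_pow_mul (m : ℕ) (w : F m) (a : ℕ) (h : w^((2:ℕ)^a) = w) :
    ∀ q : ℕ, w^((2:ℕ)^(a*q)) = w := by
  intro q
  induction q with
  | zero => simp
  | succ q ih => rw [Nat.mul_succ, pow_add, pow_mul, ih, h]

lemma pow_gcd (m : ℕ) (w : F m) : ∀ a b : ℕ, w^((2:ℕ)^a) = w → w^((2:ℕ)^b) = w →
    w^((2:ℕ)^(Nat.gcd a b)) = w := by
  intro a b
  induction a, b using Nat.gcd.induction with
  | H0 b => intro _ hb; simpa using hb
  | H1 a b ha ih =>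
    intro h1 h2
    rw [Nat.gcd_rec]
    apply ih _ h1
    have hsplit : a * (b / a) + b % a = b := Nat.div_add_mod b a
    calc w^((2:ℕ)^(b % a)) = (w^((2:ℕ)^(a*(b/a))))^((2:ℕ)^(b % a)) := by
          rw [pow_pow_mul m w a h1]
      _ = w^((2:ℕ)^b) := by rw [← pow_mul, ← pow_add, hsplit]
      _ = w := h2

lemma L_eq_zero_iff (m u : ℕ) (hmodd : Odd m) (hu : 0 < u) (hum : u < m)
    (hgcd : Nat.gcd u m = 1) (w : F m) :
    w^((2:ℕ)^u) + w^((2:ℕ)^(m-u)) = 0 ↔ (w = 0 ∨ w = 1) := by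
  have hm0 : m ≠ 0 := by omega
  constructor
  · intro h
    have heq : w^((2:ℕ)^u) = w^((2:ℕ)^(m-u)) := by
      have := CharTwo.neg_eq (R := F m) (w^((2:ℕ)^(m-u)))
      rw [← sub_eq_zero, sub_eq_add_neg, this]
      exact h
    have h2u : w^((2:ℕ)^(u+u)) = w := by
      have : (w^((2:ℕ)^u))^((2:ℕ)^u) = (w^((2:ℕ)^(m-u)))^((2:ℕ)^u) := by rw [heq]
      rw [← pow_mul, ← pow_add, ← pow_mul, ← pow_add] at this
      rw [this, Nat.sub_add_cancel (le_of_lt hum), powcard m hm0]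
    have hmw : w^((2:ℕ)^m) = w := powcard m hm0 w
    have hgcd2 : Nat.gcd (u+u) m = 1 := by
      have h1 : Nat.Coprime 2 m := hmodd.coprime_two_left
      have h2 : Nat.Coprime u m := hgcd
      have : Nat.Coprime (2*u) m := Nat.Coprime.mul h1 h2
      have huu : u + u = 2*u := by ring
      rw [huu]; exact this
    have := pow_gcd m w (u+u) m h2u hmw
    rw [hgcd2, pow_one] at this
    have hfac : w * (w + 1) = 0 := by
      rw [mul_add, mul_one, ← pow_two, this]
      exact CharTwo.add_self_eq_zero w
    rcases mul_eq_zero.mp hfac with h0 | h1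
    · exact Or.inl h0
    · right
      have hw := eq_neg_of_add_eq_zero_left h1
      rw [hw, CharTwo.neg_eq]
  · rintro (rfl | rfl)
    · rw [zero_pow (by positivity), zero_pow (by positivity), add_zero]
    · rw [one_pow, one_pow]
      exact CharTwo.add_self_eq_zero 1

noncomputable def SS (m u : ℕ) (c : F m) : ℤ :=
  ∑ x : F m, E (Tr m (x^((2:ℕ)^u + 1) + c * x))

lemma S_sq (m u : ℕ) (hmodd : Odd m) (hu : 0 < u) (hum : u < m)
    (hgcd : Nat.gcd u m = 1) (c : F m) :
    (SS m u c)^2 = 2^m * (1 + E (1 + Tr m c)) := by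
  have hm0 : m ≠ 0 := by omega
  set e : ℕ := (2:ℕ)^u + 1 with he
  set L : F m → F m := fun w => w^((2:ℕ)^u) + w^((2:ℕ)^(m-u)) with hL
  -- pointwise identity
  have hpt : ∀ x w : F m,
      E (Tr m (x^e + c*x)) * E (Tr m ((x+w)^e + c*(x+w))) =
      E (Tr m (w^e + c*w)) * E (Tr m (x * L w)) := by
    intro x w
    rw [← E_add, ← E_add, ← map_add, ← map_add]
    congr 1
    have hexp : (x+w)^e = x^e + x^((2:ℕ)^u) * w + w^((2:ℕ)^u) * x + w^e := by
      rw [he]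
      rw [pow_succ, pow_succ, pow_succ]
      rw [add_pow_char_pow]
      ring
    have htr1 : Tr m (x^((2:ℕ)^u) * w) = Tr m (x * w^((2:ℕ)^(m-u))) := by
      have hxw : (x * w^((2:ℕ)^(m-u)))^((2:ℕ)^u) = x^((2:ℕ)^u) * w := by
        rw [mul_pow, ← pow_mul, ← pow_add, Nat.sub_add_cancel (le_of_lt hum),
          powcard m hm0]
      rw [← hxw, tr_pow2]
    have h2z : (2 : F m) = 0 := CharTwo.two_eq_zero
    have harg : x^e + c*x + ((x+w)^e + c*(x+w)) =
        (w^e + c*w) + (x^((2:ℕ)^u) * w + x * w^((2:ℕ)^u)) := by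
      linear_combination hexp + (x^e + c*x) * h2z
    rw [harg]
    simp only [hL, mul_add, map_add, htr1]
    ring
  -- expand square
  rw [sq, SS, Finset.sum_mul_sum, ← he]
  have hre : ∀ x : F m, ∑ y : F m, E (Tr m (x^e + c*x)) * E (Tr m (y^e + c*y)) =
      ∑ w : F m, E (Tr m (w^e + c*w)) * E (Tr m (x * L w)) := by
    intro x
    rw [← Fintype.sum_equiv (Equiv.addLeft x)
      (fun w => E (Tr m (x^e + c*x)) * E (Tr m ((x+w)^e + c*(x+w)))) _ (fun w => rfl)]
    exact Finset.sum_congr rfl fun w _ => hpt x w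
  simp_rw [hre]
  rw [Finset.sum_comm]
  have hinner : ∀ w : F m, ∑ x : F m, E (Tr m (w^e + c*w)) * E (Tr m (x * L w)) =
      E (Tr m (w^e + c*w)) * (if L w = 0 then (2:ℤ)^m else 0) := by
    intro w
    rw [← Finset.mul_sum]
    congr 1
    calc ∑ x : F m, E (Tr m (x * L w)) = ∑ x : F m, E (Tr m (L w * x)) := by
          simp_rw [mul_comm]
      _ = _ := sumE_lin_ite m hm0 (L w)
  simp_rw [hinner]
  have hfilter : (univ.filter (fun w : F m => L w = 0)) = ({0, 1} : Finset (F m)) := by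
    ext w
    simp only [mem_filter, mem_univ, true_and, mem_insert, mem_singleton]
    rw [hL]
    exact L_eq_zero_iff m u hmodd hu hum hgcd w
  have : ∑ w : F m, E (Tr m (w^e + c*w)) * (if L w = 0 then (2:ℤ)^m else 0) =
      ∑ w ∈ univ.filter (fun w : F m => L w = 0), E (Tr m (w^e + c*w)) * (2:ℤ)^m := by
    rw [Finset.sum_filter]
    congr 1; ext w
    by_cases h : L w = 0 <;> simp [h]
  rw [this, hfilter, Finset.sum_pair (zero_ne_one)]
  have h0 : (0:F m)^e + c*0 = 0 := by
    rw [mul_zero, add_zero, zero_pow (by rw [he]; positivity)]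
  have h1 : (1:F m)^e + c*1 = 1 + c := by rw [one_pow, mul_one]
  rw [h0, h1, map_zero, E_zero, map_add, tr_one m hmodd]
  ring

lemma SS_tr_zero (m u : ℕ) (hmodd : Odd m) (hu : 0 < u) (hum : u < m)
    (hgcd : Nat.gcd u m = 1) (c : F m) (hc : Tr m c = 0) : SS m u c = 0 := by
  have h := S_sq m u hmodd hu hum hgcd c
  rw [hc] at h
  have : (1 : ZMod 2) + 0 = 1 := by decide
  rw [this, E_one] at h
  simpa using h

lemma SS_tr_one (m u : ℕ) (hmodd : Odd m) (hu : 0 < u) (hum : u < m)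
    (hgcd : Nat.gcd u m = 1) (c : F m) (hc : Tr m c = 1) :
    SS m u c = 2^((m+1)/2) ∨ SS m u c = -2^((m+1)/2) := by
  have h := S_sq m u hmodd hu hum hgcd c
  rw [hc] at h
  have h11 : (1 : ZMod 2) + 1 = 0 := by decide
  rw [h11, E_zero] at h
  have hexp : (m+1)/2*2 = m + 1 := by
    obtain ⟨k, rfl⟩ := hmodd
    omega
  have hsq : (SS m u c)^2 = ((2:ℤ)^((m+1)/2))^2 := by
    rw [h, show (1:ℤ)+1 = 2 from rfl, ← pow_succ, ← pow_mul, hexp]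
  have hfac : (SS m u c - 2^((m+1)/2)) * (SS m u c + 2^((m+1)/2)) = 0 := by
    linear_combination hsq
  rcases mul_eq_zero.mp hfac with h1 | h2
  · exact Or.inl (by linarith [sub_eq_zero.mp h1])
  · exact Or.inr (eq_neg_of_add_eq_zero_left h2)

lemma sumE_aff (m : ℕ) (hm : m ≠ 0) (c : F m) (hc : c ≠ 0) (t : ZMod 2) :
    ∑ x : F m, E (Tr m (c*x) + t) = 0 := by
  simp_rw [E_add]
  rw [← Finset.sum_mul, sumE_lin m hm c hc, zero_mul]

lemma sumE_quad (m u : ℕ) (c : F m) (t : ZMod 2) :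
    ∑ x : F m, E (Tr m (x^((2:ℕ)^u+1)) + Tr m (c*x) + t) = E t * SS m u c := by
  have : ∀ x : F m, E (Tr m (x^((2:ℕ)^u+1)) + Tr m (c*x) + t)
      = E t * E (Tr m (x^((2:ℕ)^u+1) + c*x)) := by
    intro x
    rw [← map_add, E_add, mul_comm]
  simp_rw [this]
  rw [← Finset.mul_sum, SS]

lemma sum_ite_card (m : ℕ) (P : F m → Prop) [DecidablePred P] (c : ℤ) :
    ∑ x : F m, (if P x then c else 0) = c * ((univ.filter P).card : ℤ) := by
  rw [Finset.sum_ite, Finset.sum_const, Finset.sum_const_zero, add_zero, nsmul_eq_mul]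
  ring

lemma card2 (m u : ℕ) (hmodd : Odd m) (hu : 0 < u) (hum : u < m)
    (hgcd : Nat.gcd u m = 1) (ρ : ZMod 2) :
    4 * (((univ.filter (fun x : F m =>
        Tr m x = 1 ∧ Tr m (x^((2:ℕ)^u+1)) = ρ)).card : ℤ))
      = 2^m + E (1+ρ) * SS m u 1 := by
  have hm0 : m ≠ 0 := by rintro rfl; simp at hmodd
  set e : ℕ := (2:ℕ)^u + 1 with he
  have key : ∀ x : F m, (if (Tr m x = 1 ∧ Tr m (x^e) = ρ) then (4:ℤ) else 0)
      = 1 + E (Tr m (1*x) + 1) + E (Tr m (x^e) + Tr m (0*x) + ρ)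
        + E (Tr m (x^e) + Tr m (1*x) + (1+ρ)) := by
    intro x
    rw [one_mul, zero_mul, map_zero]
    generalize Tr m x = a
    generalize Tr m (x^e) = q
    revert a q ρ
    decide
  rw [← sum_ite_card m _ (4:ℤ)]
  calc ∑ x : F m, (if (Tr m x = 1 ∧ Tr m (x^e) = ρ) then (4:ℤ) else 0)
      = ∑ x : F m, (1 + E (Tr m (1*x) + 1) + E (Tr m (x^e) + Tr m (0*x) + ρ)
        + E (Tr m (x^e) + Tr m (1*x) + (1+ρ))) := Finset.sum_congr rfl fun x _ => key x
    _ = 2^m + E (1+ρ) * SS m u 1 := by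
        simp only [Finset.sum_add_distrib]
        rw [Finset.sum_const, Finset.card_univ, cardF m hm0,
          sumE_aff m hm0 1 one_ne_zero, sumE_quad m u 0, sumE_quad m u 1,
          SS_tr_zero m u hmodd hu hum hgcd 0 (map_zero _)]
        push_cast
        ring

lemma card3 (m u : ℕ) (hmodd : Odd m) (hu : 0 < u) (hum : u < m)
    (hgcd : Nat.gcd u m = 1) (ρ : ZMod 2) (b : F m) (hb0 : b ≠ 0) (hb1 : b ≠ 1) :
    8 * (((univ.filter (fun x : F m =>
        Tr m x = 1 ∧ Tr m (x^((2:ℕ)^u+1)) = ρ ∧ Tr m (b*x) = 1)).card : ℤ))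
      = 2^m + E (1+ρ) * SS m u 1 + E (ρ+1) * SS m u b + E ρ * SS m u (1+b) := by
  have hm0 : m ≠ 0 := by rintro rfl; simp at hmodd
  have hb1' : (1:F m) + b ≠ 0 := by
    intro h
    have := eq_neg_of_add_eq_zero_right h
    rw [CharTwo.neg_eq] at this
    exact hb1 this
  set e : ℕ := (2:ℕ)^u + 1 with he
  have key : ∀ x : F m, (if (Tr m x = 1 ∧ Tr m (x^e) = ρ ∧ Tr m (b*x) = 1) then (8:ℤ) else 0)
      = 1 + E (Tr m (1*x) + 1) + E (Tr m (x^e) + Tr m (0*x) + ρ) + E (Tr m (b*x) + 1)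
        + E (Tr m (x^e) + Tr m (1*x) + (1+ρ)) + E (Tr m ((1+b)*x) + 0)
        + E (Tr m (x^e) + Tr m (b*x) + (ρ+1)) + E (Tr m (x^e) + Tr m ((1+b)*x) + ρ) := by
    intro x
    have hab : Tr m ((1+b)*x) = Tr m x + Tr m (b*x) := by rw [add_mul, one_mul, map_add]
    rw [one_mul, zero_mul, map_zero, hab]
    generalize Tr m x = a
    generalize Tr m (x^e) = q
    generalize Tr m (b*x) = l
    revert a q l ρ
    decide
  rw [← sum_ite_card m _ (8:ℤ)]
  calc ∑ x : F m, (if (Tr m x = 1 ∧ Tr m (x^e) = ρ ∧ Tr m (b*x) = 1) then (8:ℤ) else 0)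
      = ∑ x : F m, (1 + E (Tr m (1*x) + 1) + E (Tr m (x^e) + Tr m (0*x) + ρ) + E (Tr m (b*x) + 1)
        + E (Tr m (x^e) + Tr m (1*x) + (1+ρ)) + E (Tr m ((1+b)*x) + 0)
        + E (Tr m (x^e) + Tr m (b*x) + (ρ+1)) + E (Tr m (x^e) + Tr m ((1+b)*x) + ρ)) :=
        Finset.sum_congr rfl fun x _ => key x
    _ = _ := by
        simp only [Finset.sum_add_distrib]
        rw [Finset.sum_const, Finset.card_univ, cardF m hm0,
          sumE_aff m hm0 1 one_ne_zero, sumE_aff m hm0 b hb0, sumE_aff m hm0 (1+b) hb1',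
          sumE_quad m u 0, sumE_quad m u 1, sumE_quad m u b, sumE_quad m u (1+b),
          SS_tr_zero m u hmodd hu hum hgcd 0 (map_zero _)]
        push_cast
        ring

lemma ne0_iff_one (t : ZMod 2) : t ≠ 0 ↔ t = 1 := by revert t; decide

lemma natcard_filter (m : ℕ) (p : F m → Prop) [DecidablePred p] :
    Nat.card {x : F m // p x} = (univ.filter p).card := by
  simp [Nat.card_eq_fintype_card, Fintype.card_subtype]

lemma exp_reduce (m u : ℕ) (hm0 : m ≠ 0) (x : F m) :
    x^((2:ℕ)^u + 1) = x^((2:ℕ)^(u % m) + 1) := by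
  have h1 : x^((2:ℕ)^u) = x^((2:ℕ)^(u % m)) := by
    conv_lhs => rw [show u = m*(u/m) + u % m from (Nat.div_add_mod u m).symm]
    rw [pow_add, pow_mul, pow_pow_mul m x m (powcard m hm0 x) (u/m)]
  rw [pow_add, pow_add, pow_one, h1]


theorem weight_of_codeword_codeD (m u : ℕ) (hm : 5 ≤ m) (hmodd : Odd m) (hu : 0 < u)
    (hgcd : Nat.gcd u m = 1) (ρ : ZMod 2) (b : GaloisField 2 m) (hb : b ≠ 0) :
    (b = 1 → wt (codeMap m u ρ b) = Nat.card (Dset m u ρ)) ∧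
    (b ≠ 1 →
      wt (codeMap m u ρ b) ∈
        ({Nat.card (Dset m u ρ) / 2 - 2 ^ ((m - 5) / 2),
          Nat.card (Dset m u ρ) / 2 + 2 ^ ((m - 5) / 2)} : Set ℕ)) := by
  classical
  have hm0 : m ≠ 0 := by omega
  have hcm : ∀ (bb : GaloisField 2 m) (d : ↥(Dset m u ρ)),
      codeMap m u ρ bb d = Tr m (bb * (d : F m)) := fun _ _ => rfl
  constructor
  · rintro rfl
    unfold wt
    apply Nat.card_congr
    apply Equiv.subtypeUnivEquiv
    intro i
    rw [hcm, one_mul]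
    have h1 : Tr m (i : F m) = 1 := i.2.1
    rw [h1]
    exact one_ne_zero
  · intro hb1
    -- reduce exponent
    set u' := u % m with hu'
    have hu'0 : 0 < u' := by
      rcases Nat.eq_zero_or_pos u' with h | h
      · exfalso
        have hdvd : m ∣ u := Nat.dvd_of_mod_eq_zero h
        have : m ∣ Nat.gcd u m := Nat.dvd_gcd hdvd dvd_rfl
        rw [hgcd] at this
        have := Nat.le_of_dvd one_pos this
        omega
      · exact h
    have hu'm : u' < m := Nat.mod_lt u (by omega)
    have hgcd' : Nat.gcd u' m = 1 := by
      have h1 : Nat.gcd (u % m) m = Nat.gcd m u := (Nat.gcd_rec m u).symm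
      rw [hu', h1, Nat.gcd_comm]
      exact hgcd
    -- weight as a filter card
    have hwt : wt (codeMap m u ρ b) = ((univ.filter (fun x : F m =>
        Tr m x = 1 ∧ Tr m (x^((2:ℕ)^u'+1)) = ρ ∧ Tr m (b*x) = 1)).card) := by
      unfold wt
      rw [Nat.card_congr (Equiv.subtypeEquivRight (fun i : ↥(Dset m u ρ) => by
        rw [hcm b i]))]
      rw [Nat.card_congr (Equiv.subtypeSubtypeEquivSubtypeInter
        (· ∈ Dset m u ρ) (fun x => Tr m (b*x) ≠ 0))]
      rw [Nat.card_congr (Equiv.subtypeEquivRight (q := fun x : F m =>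
          Tr m x = 1 ∧ Tr m (x^((2:ℕ)^u'+1)) = ρ ∧ Tr m (b*x) = 1) (fun x => by
        constructor
        · rintro ⟨⟨h1, h2⟩, h3⟩
          exact ⟨h1, by rw [← exp_reduce m u hm0 x]; exact h2, (ne0_iff_one _).mp h3⟩
        · rintro ⟨h1, h2, h3⟩
          exact ⟨⟨h1, by rw [exp_reduce m u hm0 x]; exact h2⟩, (ne0_iff_one _).mpr h3⟩))]
      exact natcard_filter m _
    have hn : Nat.card (Dset m u ρ) = ((univ.filter (fun x : F m =>
        Tr m x = 1 ∧ Tr m (x^((2:ℕ)^u'+1)) = ρ)).card) := by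
      rw [Nat.card_congr (Equiv.subtypeEquivRight (q := fun x : F m =>
          Tr m x = 1 ∧ Tr m (x^((2:ℕ)^u'+1)) = ρ) (fun x => by
        constructor
        · rintro ⟨h1, h2⟩
          exact ⟨h1, by rw [← exp_reduce m u hm0 x]; exact h2⟩
        · rintro ⟨h1, h2⟩
          exact ⟨h1, by rw [exp_reduce m u hm0 x]; exact h2⟩))]
      exact natcard_filter m _
    -- the two character-sum identities
    have h8 := card3 m u' hmodd hu'0 hu'm hgcd' ρ b hb hb1
    have h4 := card2 m u' hmodd hu'0 hu'm hgcd' ρ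
    rw [← hwt] at h8
    rw [← hn] at h4
    -- split on Tr b
    have htrb1 : Tr m (1 + b) = 1 + Tr m b := by rw [map_add, tr_one m hmodd]
    have hEsign : ∀ t : ZMod 2, E t = 1 ∨ E t = -1 := by decide
    have hEflip : ∀ t : ZMod 2, E (t + 1) = -E t := by decide
    have hkey : 8 * (wt (codeMap m u ρ b) : ℤ) = 4 * (Nat.card (Dset m u ρ) : ℤ)
        + (2:ℤ)^((m+1)/2) ∨
        8 * (wt (codeMap m u ρ b) : ℤ) = 4 * (Nat.card (Dset m u ρ) : ℤ)
        - (2:ℤ)^((m+1)/2) := by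
      rcases (show Tr m b = 0 ∨ Tr m b = 1 by generalize Tr m b = t; revert t; decide) with htb | htb
      · have hSb : SS m u' b = 0 := SS_tr_zero m u' hmodd hu'0 hu'm hgcd' b htb
        have htb' : Tr m (1 + b) = 1 := by rw [htrb1, htb, add_zero]
        rcases SS_tr_one m u' hmodd hu'0 hu'm hgcd' (1+b) htb' with hS | hS <;>
          rcases hEsign ρ with hE | hE <;>
          [left; right; right; left] <;>
          (rw [hSb, hS, hE] at h8; try rw [hSb, hS, hE] at h8) <;> linarith
      · have hSb : SS m u' (1+b) = 0 := by
          apply SS_tr_zero m u' hmodd hu'0 hu'm hgcd'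
          rw [htrb1, htb]
          decide
        rcases SS_tr_one m u' hmodd hu'0 hu'm hgcd' b htb with hS | hS <;>
          rcases hEsign (ρ+1) with hE | hE <;>
          [left; right; right; left] <;>
          (rw [hSb, hS, hE] at h8) <;> linarith
    have hexp : (2:ℤ)^((m+1)/2) = 8 * (2:ℤ)^((m-5)/2) := by
      have h1 : (m+1)/2 = (m-5)/2 + 3 := by
        obtain ⟨j, rfl⟩ := hmodd
        omega
      rw [h1, pow_add]
      ring
    have ht : (((2:ℕ)^((m-5)/2) : ℕ) : ℤ) = (2:ℤ)^((m-5)/2) := by push_cast; ring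
    rw [hexp, ← ht] at hkey
    simp only [Set.mem_insert_iff, Set.mem_singleton_iff]
    omega
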